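/- arXiv:2104.07187 — 17 statements merged into one kernel-verified Lean document; each statement's English description precedes it below -/
import Mathlib

section
/- Let R be a commutative ring with nonzero identity, δ an expansion function of the ideals of R, and I a proper ideal of R. Then the following are equivalent: (1) I is a δ-J-ideal of R; (2) for every a ∈ R and every ideal K of R with aK ⊆ I, either a ∈ J(R) or K ⊆ δ(I); (3) for all ideals K and L of R with KL ⊆ I, either K ⊆ J(R) or L ⊆ δ(I). -/
/-- A proper ideal `I` is a `δ`-`J`-ideal if whenever `a * b ∈ I`,
then `a ∈ J(R)` or `b ∈ δ I`. -/
def IsDeltaJIdeal {R : Type*} [CommRing R] (δ : Ideal R → Ideal R) (I : Ideal R) : Prop :=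
  I ≠ ⊤ ∧ ∀ a b : R, a * b ∈ I → a ∈ (⊥ : Ideal R).jacobson ∨ b ∈ δ I

theorem deltaJ_tfae {R : Type*} [CommRing R] [Nontrivial R]
    (δ : Ideal R → Ideal R)
    (hexp : ∀ I : Ideal R, I ≤ δ I)
    (hmono : ∀ I J : Ideal R, I ≤ J → δ I ≤ δ J)
    (I : Ideal R) (hI : I ≠ ⊤) :
    List.TFAE
      [ IsDeltaJIdeal δ I,
        ∀ (a : R) (K : Ideal R), Ideal.span {a} * K ≤ I →
          a ∈ (⊥ : Ideal R).jacobson ∨ K ≤ δ I,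
        ∀ K L : Ideal R, K * L ≤ I →
          K ≤ (⊥ : Ideal R).jacobson ∨ L ≤ δ I ] := by
  tfae_have 1 → 2 := by
    rintro ⟨-, h⟩ a K hK
    by_cases ha : a ∈ (⊥ : Ideal R).jacobson
    · exact Or.inl ha
    · refine Or.inr fun k hk => ?_
      rcases h a k (hK (Ideal.mul_mem_mul (Ideal.subset_span rfl) hk)) with h' | h'
      · exact absurd h' ha
      · exact h'
  tfae_have 2 → 3 := by
    intro h K L hKL
    by_cases hK : K ≤ (⊥ : Ideal R).jacobson
    · exact Or.inl hK
    · obtain ⟨a, haK, haJ⟩ := Set.not_subset.mp hK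
      refine Or.inr ?_
      rcases h a L (le_trans (Ideal.mul_mono_left
        ((Ideal.span_singleton_le_iff_mem K).mpr haK)) hKL) with h' | h'
      · exact absurd h' haJ
      · exact h'
  tfae_have 3 → 1 := by
    intro h
    refine ⟨hI, fun a b hab => ?_⟩
    rcases h (Ideal.span {a}) (Ideal.span {b}) (by
      rw [Ideal.span_singleton_mul_span_singleton]
      exact (Ideal.span_singleton_le_iff_mem I).mpr hab) with h' | h'
    · exact Or.inl (h' (Ideal.subset_span rfl))
    · exact Or.inr (h' (Ideal.subset_span rfl))
  tfae_finish
end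

section
/- Let R be a commutative ring with nonzero identity, δ an expansion function of the ideals of R, and I a proper ideal of R with δ(I) ≠ R. Then I is a δ-J-ideal of R if and only if I ⊆ J(R) and whenever a, b ∈ R with ab ∈ I, either a lies in the Jacobson radical of I (the intersection of all maximal ideals of R containing I) or b ∈ δ(I). -/
theorem deltaJ_iff_subset_jacobson {R : Type*} [CommRing R] [Nontrivial R]
    (δ : Ideal R → Ideal R)
    (hexp : ∀ I : Ideal R, I ≤ δ I)
    (hmono : ∀ I J : Ideal R, I ≤ J → δ I ≤ δ J)
    (I : Ideal R) (hI : I ≠ ⊤) (hδI : δ I ≠ ⊤) :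
    IsDeltaJIdeal δ I ↔
      (I ≤ (⊥ : Ideal R).jacobson ∧
        ∀ a b : R, a * b ∈ I → a ∈ I.jacobson ∨ b ∈ δ I) := by
  constructor
  · rintro ⟨-, h⟩
    constructor
    · intro a ha
      rcases h a 1 (by simpa using ha) with h' | h'
      · exact h'
      · exact absurd ((Ideal.eq_top_iff_one _).mpr h') hδI
    · intro a b hab
      rcases h a b hab with h' | h'
      · exact Or.inl (Ideal.jacobson_mono bot_le h')
      · exact Or.inr h'
  · rintro ⟨hle, h⟩
    refine ⟨hI, fun a b hab => ?_⟩
    rcases h a b hab with h' | h'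
    · left
      have : I.jacobson = (⊥ : Ideal R).jacobson := by
        apply le_antisymm
        · apply sInf_le_sInf
          rintro M ⟨-, hM⟩
          exact ⟨hle.trans (sInf_le ⟨bot_le, hM⟩), hM⟩
        · exact Ideal.jacobson_mono bot_le
      exact this ▸ h'
    · exact Or.inr h'
end

section
/- Let R be a commutative ring with nonzero identity and δ an expansion function of the ideals of R such that δ(I) ≠ R for every proper ideal I of R. Then the following are equivalent: (1) R is a quasi-local (local) ring, i.e., R has a unique maximal ideal, which then equals J(R); (2) every proper principal ideal of R is a δ-J-ideal of R; (3) every proper ideal of R is a δ-J-ideal of R. -/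
theorem local_iff_every_ideal_deltaJ {R : Type*} [CommRing R] [Nontrivial R]
    (δ : Ideal R → Ideal R)
    (hexp : ∀ I : Ideal R, I ≤ δ I)
    (hmono : ∀ I J : Ideal R, I ≤ J → δ I ≤ δ J)
    (hproper : ∀ I : Ideal R, I ≠ ⊤ → δ I ≠ ⊤) :
    List.TFAE
      [ IsLocalRing R,
        ∀ x : R, Ideal.span {x} ≠ ⊤ → IsDeltaJIdeal δ (Ideal.span {x}),
        ∀ I : Ideal R, I ≠ ⊤ → IsDeltaJIdeal δ I ] := by
  tfae_have 1 → 3 := by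
    intro hL I hI
    refine ⟨hI, fun a b hab => ?_⟩
    by_cases ha : IsUnit a
    · right
      obtain ⟨u, rfl⟩ := ha
      have : b = (↑u⁻¹ : R) * (↑u * b) := by
        rw [← mul_assoc, Units.inv_mul, one_mul]
      rw [this]
      exact hexp I (I.mul_mem_left _ hab)
    · left
      rw [IsLocalRing.jacobson_eq_maximalIdeal ⊥ bot_ne_top]
      exact ha
  tfae_have 3 → 2 := fun h x hx => h _ hx
  tfae_have 2 → 1 := by
    intro h
    have key : ∀ a : R, ¬ IsUnit a → a ∈ (⊥ : Ideal R).jacobson := by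
      intro a ha
      have hs : Ideal.span {a} ≠ ⊤ := by
        simpa [Ideal.span_singleton_eq_top] using ha
      obtain ⟨-, h2⟩ := h a hs
      rcases h2 a 1 (by simpa using Ideal.mem_span_singleton_self a) with h' | h'
      · exact h'
      · exact absurd (Ideal.eq_top_iff_one _ |>.2 h') (hproper _ hs)
    apply IsLocalRing.of_nonunits_add
    intro a b ha hb
    have hmem : a + b ∈ (⊥ : Ideal R).jacobson := Ideal.add_mem _ (key a ha) (key b hb)
    intro hab
    obtain ⟨M, hM⟩ := Ideal.exists_maximal R
    have hle : (⊥ : Ideal R).jacobson ≤ M := sInf_le ⟨bot_le, hM⟩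
    exact hM.ne_top (Ideal.eq_top_of_isUnit_mem _ (hle hmem) hab)
  tfae_finish
end

section
/- Let R be a commutative ring with nonzero identity, δ an expansion function of the ideals of R, and I a δ-primary ideal of R with δ(I) ≠ R. Then I is a δ-J-ideal of R if and only if I ⊆ J(R). -/
/-- A proper ideal `I` is `δ`-primary if whenever `a * b ∈ I` and `a ∉ I`, then `b ∈ δ I`. -/
def IsDeltaPrimary {R : Type*} [CommRing R] (δ : Ideal R → Ideal R) (I : Ideal R) : Prop :=
  I ≠ ⊤ ∧ ∀ a b : R, a * b ∈ I → a ∉ I → b ∈ δ I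

theorem deltaPrimary_deltaJ_iff {R : Type*} [CommRing R] [Nontrivial R]
    (δ : Ideal R → Ideal R)
    (hexp : ∀ I : Ideal R, I ≤ δ I)
    (hmono : ∀ I J : Ideal R, I ≤ J → δ I ≤ δ J)
    (I : Ideal R) (hprim : IsDeltaPrimary δ I) (hδI : δ I ≠ ⊤) :
    IsDeltaJIdeal δ I ↔ I ≤ (⊥ : Ideal R).jacobson := by
  constructor
  · rintro ⟨-, hJ⟩ a ha
    rcases hJ a 1 (by simpa using ha) with h | h
    · exact h
    · exact absurd ((Ideal.eq_top_iff_one _).2 h) hδI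
  · intro hIJ
    refine ⟨hprim.1, fun a b hab => ?_⟩
    by_cases haI : a ∈ I
    · exact Or.inl (hIJ haI)
    · exact Or.inr (hprim.2 a b hab haI)
end

section
/- Let R be a commutative ring with nonzero identity, δ an expansion function of the ideals of R, and I a maximal ideal of R with δ(I) ≠ R. Then I is a δ-J-ideal of R if and only if I = J(R). -/
theorem maximal_deltaJ_iff_eq_jacobson {R : Type*} [CommRing R] [Nontrivial R]
    (δ : Ideal R → Ideal R)
    (hexp : ∀ I : Ideal R, I ≤ δ I)
    (hmono : ∀ I J : Ideal R, I ≤ J → δ I ≤ δ J)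
    (I : Ideal R) (hmax : I.IsMaximal) (hδI : δ I ≠ ⊤) :
    IsDeltaJIdeal δ I ↔ I = (⊥ : Ideal R).jacobson := by
  have hJle : (⊥ : Ideal R).jacobson ≤ I := sInf_le ⟨bot_le, hmax⟩
  have hδeq : δ I = I := by
    rcases hmax.eq_of_le (J := δ I) hδI (hexp I) with h
    exact h.symm
  constructor
  · rintro ⟨hne, h⟩
    refine le_antisymm (fun a ha => ?_) hJle
    rcases h a 1 (by simpa using ha) with h1 | h1
    · exact h1
    · exact absurd (hδeq ▸ h1 : (1 : R) ∈ I) (fun c => hne (Ideal.eq_top_iff_one I |>.mpr c))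
  · intro hIJ
    refine ⟨hmax.ne_top, fun a b hab => ?_⟩
    rcases hmax.isPrime.mem_or_mem hab with h | h
    · exact Or.inl (hIJ ▸ h)
    · exact Or.inr (hexp I h)
end

section
/- Let R be a commutative ring with nonzero identity, δ an expansion function of the ideals of R, and I a δ-J-ideal of R. If x ∈ R is such that (δ(I) : x) ⊆ δ((I : x)) and δ((I : x)) ≠ R, then the ideal quotient (I : x) is a δ-J-ideal of R. -/
theorem colon_deltaJ {R : Type*} [CommRing R] [Nontrivial R]
    (δ : Ideal R → Ideal R)
    (hexp : ∀ I : Ideal R, I ≤ δ I)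
    (hmono : ∀ I J : Ideal R, I ≤ J → δ I ≤ δ J)
    (I : Ideal R) (hI : IsDeltaJIdeal δ I) (x : R)
    (hcolon : (δ I).colon (Ideal.span {x}) ≤ δ (I.colon (Ideal.span {x})))
    (hproper : δ (I.colon (Ideal.span {x})) ≠ ⊤) :
    IsDeltaJIdeal δ (I.colon (Ideal.span {x})) := by
  constructor
  · intro h
    exact hproper (top_le_iff.mp (h ▸ hexp _))
  · intro a b hab
    have habx : a * (b * x) ∈ I := by
      have := Ideal.mem_colon_span_singleton.mp hab
      ring_nf
      exact this
    rcases hI.2 a (b * x) habx with h | h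
    · exact Or.inl h
    · right
      exact hcolon (Ideal.mem_colon_span_singleton.mpr h)
end

section
/- Let R be a commutative ring with nonzero identity and δ an expansion function of the ideals of R. Suppose I is a maximal element (with respect to inclusion) of the set of δ-J-ideals of R, that δ(I) ≠ R, and that for every x ∈ R with x ∉ J(R) one has (δ(I) : x) ⊆ δ((I : x)) and δ((I : x)) ≠ R. Then I is a J-ideal of R. -/
/-- A proper ideal `I` is a `J`-ideal if whenever `a * b ∈ I`,
then `a ∈ J(R)` or `b ∈ I`. -/
def IsJIdeal {R : Type*} [CommRing R] (I : Ideal R) : Prop :=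
  I ≠ ⊤ ∧ ∀ a b : R, a * b ∈ I → a ∈ (⊥ : Ideal R).jacobson ∨ b ∈ I

theorem maximal_deltaJ_isJIdeal {R : Type*} [CommRing R] [Nontrivial R]
    (δ : Ideal R → Ideal R)
    (hexp : ∀ I : Ideal R, I ≤ δ I)
    (hmono : ∀ I J : Ideal R, I ≤ J → δ I ≤ δ J)
    (I : Ideal R)
    (hI : IsDeltaJIdeal δ I)
    (hmaxelt : ∀ I' : Ideal R, IsDeltaJIdeal δ I' → I ≤ I' → I = I')
    (hδI : δ I ≠ ⊤)
    (hcolon : ∀ x : R, x ∉ (⊥ : Ideal R).jacobson →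
      (δ I).colon (Ideal.span {x}) ≤ δ (I.colon (Ideal.span {x})) ∧
        δ (I.colon (Ideal.span {x})) ≠ ⊤) :
    IsJIdeal I := by
  refine ⟨hI.1, fun a b hab => ?_⟩
  by_cases ha : a ∈ (⊥ : Ideal R).jacobson
  · exact Or.inl ha
  · right
    obtain ⟨hsub, hne⟩ := hcolon a ha
    have hJ : IsDeltaJIdeal δ (I.colon (Ideal.span {a})) := by
      constructor
      · intro htop
        apply hne
        rw [htop]
        exact top_le_iff.mp (hexp ⊤)
      · intro c d hcd
        rw [Ideal.mem_colon_span_singleton, mul_assoc] at hcd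
        rcases hI.2 c (d * a) hcd with h | h
        · exact Or.inl h
        · exact Or.inr (hsub (Ideal.mem_colon_span_singleton.mpr h))
    have hle : I ≤ I.colon (Ideal.span {a}) := fun x hx =>
      Ideal.mem_colon_span_singleton.mpr (Ideal.mul_mem_right a I hx)
    have := hmaxelt _ hJ hle
    rw [this]
    exact Ideal.mem_colon_span_singleton.mpr (by rwa [mul_comm] at hab)
end

section
/- Let R be a nonzero commutative ring with identity and δ an expansion function of the ideals of R such that δ(I) ≠ R for every proper ideal I of R, and such that (δ(J(R)) : x) ⊆ δ((J(R) : x)) for every x ∈ R with x ∉ J(R). Then the following are equivalent: (1) J(R) is a J-ideal of R; (2) J(R) is a δ-J-ideal of R; (3) J(R) is a prime ideal of R. -/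
theorem jacobson_tfae {R : Type*} [CommRing R] [Nontrivial R]
    (δ : Ideal R → Ideal R)
    (hexp : ∀ I : Ideal R, I ≤ δ I)
    (hmono : ∀ I J : Ideal R, I ≤ J → δ I ≤ δ J)
    (hproper : ∀ I : Ideal R, I ≠ ⊤ → δ I ≠ ⊤)
    (hcolon : ∀ x : R, x ∉ (⊥ : Ideal R).jacobson →
      (δ ((⊥ : Ideal R).jacobson)).colon (Ideal.span {x}) ≤
        δ (((⊥ : Ideal R).jacobson).colon (Ideal.span {x}))) :
    List.TFAE
      [ IsJIdeal ((⊥ : Ideal R).jacobson),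
        IsDeltaJIdeal δ ((⊥ : Ideal R).jacobson),
        ((⊥ : Ideal R).jacobson).IsPrime ] := by
  have hJtop : ((⊥ : Ideal R).jacobson) ≠ ⊤ := by
    intro h
    obtain ⟨M, hM⟩ := Ideal.exists_maximal R
    have : ((⊥ : Ideal R).jacobson) ≤ M := by
      exact sInf_le ⟨bot_le, hM⟩
    rw [h] at this
    exact hM.ne_top (top_le_iff.mp this)
  have hfix : δ ((⊥ : Ideal R).jacobson) = (⊥ : Ideal R).jacobson := by
    refine le_antisymm ?_ (hexp _)
    intro x hx
    by_contra hxJ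
    have h1 : (1 : R) ∈ (δ ((⊥ : Ideal R).jacobson)).colon (Ideal.span {x}) := by
      rw [Ideal.mem_colon_span_singleton, one_mul]; exact hx
    have h2 := hcolon x hxJ h1
    have h3 : δ (((⊥ : Ideal R).jacobson).colon (Ideal.span {x})) = ⊤ :=
      Ideal.eq_top_of_isUnit_mem _ h2 isUnit_one
    have h4 : (((⊥ : Ideal R).jacobson).colon (Ideal.span {x})) = ⊤ := by
      by_contra h
      exact hproper _ h h3
    have : (1 : R) ∈ (((⊥ : Ideal R).jacobson).colon (Ideal.span {x})) := h4 ▸ trivial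
    rw [Ideal.mem_colon_span_singleton, one_mul] at this
    exact hxJ this
  tfae_have 1 → 2 := by
    rintro ⟨h1, h2⟩
    exact ⟨h1, fun a b hab => (h2 a b hab).imp id (fun h => hexp _ h)⟩
  tfae_have 2 → 3 := by
    rintro ⟨h1, h2⟩
    refine ⟨h1, fun {a b} hab => ?_⟩
    rcases h2 a b hab with h | h
    · exact Or.inl h
    · exact Or.inr (hfix ▸ h)
  tfae_have 3 → 1 := by
    intro h
    exact ⟨h.ne_top, fun a b hab => h.mem_or_mem hab⟩
  tfae_finish
end

section
/- Let R be a commutative ring with nonzero identity, δ an expansion function of the ideals of R, and I a proper ideal of R with δ(δ(I)) = δ(I). If I is a δ-J-ideal of R and a ∈ R with a ∉ J(R), then δ((I : a)) = δ(I). -/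
theorem delta_colon_eq {R : Type*} [CommRing R] [Nontrivial R]
    (δ : Ideal R → Ideal R)
    (hexp : ∀ I : Ideal R, I ≤ δ I)
    (hmono : ∀ I J : Ideal R, I ≤ J → δ I ≤ δ J)
    (I : Ideal R) (hI : I ≠ ⊤) (hidem : δ (δ I) = δ I)
    (hJ : IsDeltaJIdeal δ I) (a : R) (ha : a ∉ (⊥ : Ideal R).jacobson) :
    δ (I.colon (Ideal.span {a})) = δ I := by
  apply le_antisymm
  · have hsub : I.colon (Ideal.span {a}) ≤ δ I := by
      intro x hx
      have hax : a * x ∈ I := by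
        have := Ideal.mem_colon_span_singleton.mp hx
        rwa [mul_comm]
      rcases hJ.2 a x hax with h | h
      · exact absurd h ha
      · exact h
    calc δ (I.colon (Ideal.span {a})) ≤ δ (δ I) := hmono _ _ hsub
      _ = δ I := hidem
  · exact hmono _ _ (fun x hx => Ideal.mem_colon_span_singleton.mpr (Ideal.mul_mem_right a I hx))
end

section
/- Let R be a commutative ring with nonzero identity and δ an expansion function of the ideals of R. Let I and J be δ-J-ideals of R with δ(δ(I)) = δ(I) and δ(δ(J)) = δ(J), and let K be an ideal of R such that IK = JK and K is not contained in J(R). Then δ(I) = δ(J). -/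
theorem delta_eq_of_mul_eq {R : Type*} [CommRing R] [Nontrivial R]
    (δ : Ideal R → Ideal R)
    (hexp : ∀ I' : Ideal R, I' ≤ δ I')
    (hmono : ∀ I' J' : Ideal R, I' ≤ J' → δ I' ≤ δ J')
    (I J K : Ideal R)
    (hI : IsDeltaJIdeal δ I) (hJ : IsDeltaJIdeal δ J)
    (hidemI : δ (δ I) = δ I) (hidemJ : δ (δ J) = δ J)
    (hK : ¬ K ≤ (⊥ : Ideal R).jacobson)
    (heq : I * K = J * K) :
    δ I = δ J := by
  obtain ⟨k, hkK, hkJ⟩ := SetLike.not_le_iff_exists.mp hK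
  have key : ∀ (A B : Ideal R), IsDeltaJIdeal δ B → A * K = B * K → A ≤ δ B := by
    intro A B hB hAB a ha
    have hk : k * a ∈ B := by
      have : a * k ∈ B * K := hAB ▸ Ideal.mul_mem_mul ha hkK
      have := Ideal.mul_le_left this
      rwa [mul_comm] at this
    rcases hB.2 k a hk with h | h
    · exact absurd h hkJ
    · exact h
  have h1 : δ I ≤ δ J := hidemJ ▸ hmono _ _ (key I J hJ heq)
  have h2 : δ J ≤ δ I := hidemI ▸ hmono _ _ (key J I hI heq.symm)
  exact le_antisymm h1 h2
end

section
/- Let R be a commutative ring with nonzero identity and δ an expansion function of the ideals of R. Let I be an ideal of R and K an ideal of R not contained in J(R). If both IK and I are δ-J-ideals of R and δ(δ(IK)) = δ(IK), then δ(IK) = δ(I). -/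
theorem delta_mul_eq {R : Type*} [CommRing R] [Nontrivial R]
    (δ : Ideal R → Ideal R)
    (hexp : ∀ I' : Ideal R, I' ≤ δ I')
    (hmono : ∀ I' J' : Ideal R, I' ≤ J' → δ I' ≤ δ J')
    (I K : Ideal R)
    (hK : ¬ K ≤ (⊥ : Ideal R).jacobson)
    (hIK : IsDeltaJIdeal δ (I * K)) (hI : IsDeltaJIdeal δ I)
    (hidem : δ (δ (I * K)) = δ (I * K)) :
    δ (I * K) = δ I := by
  obtain ⟨k, hkK, hkJ⟩ := SetLike.not_le_iff_exists.mp hK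
  apply le_antisymm
  · exact hmono _ _ Ideal.mul_le_left
  · have hIle : I ≤ δ (I * K) := by
      intro a ha
      have hmem : k * a ∈ I * K := by
        rw [mul_comm k a]; exact Ideal.mul_mem_mul ha hkK
      rcases hIK.2 k a hmem with h | h
      · exact absurd h hkJ
      · exact h
    calc δ I ≤ δ (δ (I * K)) := hmono _ _ hIle
      _ = δ (I * K) := hidem
end

section
/- Let R be a commutative ring with nonzero identity and I a proper ideal of R. If I is a δ₁-J-ideal of R, where δ₁ is the radical expansion δ₁(I) = √I, then √I is a J-ideal of R; that is, whenever a, b ∈ R with ab ∈ √I, either a ∈ J(R) or b ∈ √I. -/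
theorem radical_JIdeal_of_radicalJ {R : Type*} [CommRing R] [Nontrivial R]
    (I : Ideal R) (hI : I ≠ ⊤)
    (h : ∀ a b : R, a * b ∈ I → a ∈ (⊥ : Ideal R).jacobson ∨ b ∈ I.radical) :
    IsJIdeal I.radical := by
  constructor
  · intro htop
    exact hI (by simpa [Ideal.radical_eq_top] using htop)
  · intro a b hab
    obtain ⟨n, hn⟩ := hab
    rw [mul_pow] at hn
    rcases h (a ^ n) (b ^ n) hn with ha | hb
    · left
      rw [Ideal.jacobson, Ideal.mem_sInf] at ha ⊢
      intro J hJ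
      have hprime : J.IsPrime := hJ.2.isPrime
      exact hprime.mem_of_pow_mem n (ha hJ)
    · right
      obtain ⟨m, hm⟩ := hb
      exact ⟨n * m, by rwa [pow_mul]⟩
end

section
/- Let R be a commutative ring with nonzero identity, δ an expansion function of the ideals of R, and let J, K, I be proper ideals of R with J ⊆ K ⊆ I. If I is a δ-J-ideal of R and δ(J) = δ(I), then K is a δ-J-ideal of R. -/
theorem sandwich_deltaJ {R : Type*} [CommRing R] [Nontrivial R]
    (δ : Ideal R → Ideal R)
    (hexp : ∀ I' : Ideal R, I' ≤ δ I')
    (hmono : ∀ I' J' : Ideal R, I' ≤ J' → δ I' ≤ δ J')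
    (J K I : Ideal R) (hJK : J ≤ K) (hKI : K ≤ I)
    (hJ : J ≠ ⊤) (hK : K ≠ ⊤)
    (hI : IsDeltaJIdeal δ I) (hδ : δ J = δ I) :
    IsDeltaJIdeal δ K := by
  refine ⟨hK, fun a b hab => (hI.2 a b (hKI hab)).imp id fun h => hmono J K hJK ?_⟩
  rw [hδ]; exact h
end

section
/- Let R be a commutative ring with nonzero identity and δ an expansion function of the ideals of R that preserves intersections, i.e., δ(I ∩ J) = δ(I) ∩ δ(J) for all ideals I, J of R. If I₁, I₂, …, Iₙ (n ≥ 1) are δ-J-ideals of R, then their intersection I = ⋂_{i=1}^{n} Iᵢ is a δ-J-ideal of R. -/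
lemma delta_finset_inf {R : Type*} [CommRing R] (δ : Ideal R → Ideal R)
    (hinter : ∀ I J : Ideal R, δ (I ⊓ J) = δ I ⊓ δ J)
    {ι : Type*} (Is : ι → Ideal R) (s : Finset ι) (hs : s.Nonempty) :
    δ (s.inf Is) = s.inf fun i => δ (Is i) := by
  induction hs using Finset.Nonempty.cons_induction with
  | singleton i => simp
  | cons i s his hs ih =>
    simp only [Finset.inf_cons, hinter, ih]

theorem inter_deltaJ {R : Type*} [CommRing R] [Nontrivial R]
    (δ : Ideal R → Ideal R)
    (hexp : ∀ I : Ideal R, I ≤ δ I)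
    (hmono : ∀ I J : Ideal R, I ≤ J → δ I ≤ δ J)
    (hinter : ∀ I J : Ideal R, δ (I ⊓ J) = δ I ⊓ δ J)
    (n : ℕ) (hn : 1 ≤ n) (Is : Fin n → Ideal R)
    (h : ∀ i, IsDeltaJIdeal δ (Is i)) :
    IsDeltaJIdeal δ (⨅ i, Is i) := by
  have hne : (Finset.univ : Finset (Fin n)).Nonempty := by
    have : Nonempty (Fin n) := Fin.pos_iff_nonempty.mp hn
    exact Finset.univ_nonempty
  have hinf : (⨅ i, Is i) = Finset.univ.inf Is := by
    simp [Finset.inf_eq_iInf]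
  constructor
  · intro htop
    obtain ⟨i, _⟩ := hne
    exact (h i).1 (top_le_iff.mp ((htop ▸ iInf_le Is i)))
  · intro a b hab
    by_cases ha : a ∈ (⊥ : Ideal R).jacobson
    · exact Or.inl ha
    · right
      rw [hinf, delta_finset_inf δ hinter Is _ hne, Finset.inf_eq_iInf]
      rw [Ideal.mem_iInf]
      intro i
      rw [Ideal.mem_iInf]
      intro _
      rcases (h i).2 a b (by rw [Ideal.mem_iInf] at hab; exact hab i) with h' | h'
      · exact absurd h' ha
      · exact h'
end

section
/- Let R be a commutative ring with nonzero identity and δ an expansion function of the ideals of R that preserves intersections. Let I₁, I₂, …, Iₙ (n ≥ 2) be proper ideals of R such that each δ(Iₖ) is a prime ideal and, for all j ≠ k, Iⱼ is not contained in δ(Iₖ). If the intersection I = ⋂_{i=1}^{n} Iᵢ is a δ-J-ideal of R, then Iₖ is a δ-J-ideal of R for every k = 1, …, n. -/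
theorem components_deltaJ_of_inter_deltaJ {R : Type*} [CommRing R] [Nontrivial R]
    (δ : Ideal R → Ideal R)
    (hexp : ∀ I : Ideal R, I ≤ δ I)
    (hmono : ∀ I J : Ideal R, I ≤ J → δ I ≤ δ J)
    (hinter : ∀ I J : Ideal R, δ (I ⊓ J) = δ I ⊓ δ J)
    (n : ℕ) (hn : 2 ≤ n) (Is : Fin n → Ideal R)
    (hproper : ∀ i, Is i ≠ ⊤)
    (hprime : ∀ i, (δ (Is i)).IsPrime)
    (hnoncomp : ∀ j k : Fin n, j ≠ k → ¬ Is j ≤ δ (Is k))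
    (h : IsDeltaJIdeal δ (⨅ i, Is i)) :
    ∀ k, IsDeltaJIdeal δ (Is k) := by
  intro k
  refine ⟨hproper k, fun a b hab => ?_⟩
  by_cases ha : a ∈ (⊥ : Ideal R).jacobson
  · exact Or.inl ha
  -- choose elements
  have hchoice : ∀ j : Fin n, j ≠ k → ∃ x, x ∈ Is j ∧ x ∉ δ (Is k) := by
    intro j hj
    obtain ⟨x, hx1, hx2⟩ := SetLike.not_le_iff_exists.mp (hnoncomp j k hj)
    exact ⟨x, hx1, hx2⟩
  classical
  set f : Fin n → R := fun j => if hj : j ≠ k then (hchoice j hj).choose else 1 with hf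
  have hf1 : ∀ j, j ≠ k → f j ∈ Is j := by
    intro j hj
    simp only [hf, dif_pos hj]
    exact (hchoice j hj).choose_spec.1
  have hf2 : ∀ j, j ≠ k → f j ∉ δ (Is k) := by
    intro j hj
    simp only [hf, dif_pos hj]
    exact (hchoice j hj).choose_spec.2
  set c : R := ∏ j ∈ Finset.univ.erase k, f j with hc
  have hcmem : ∀ j : Fin n, j ≠ k → c ∈ Is j := by
    intro j hj
    rw [hc, ← Finset.prod_erase_mul _ _ (Finset.mem_erase.mpr ⟨hj, Finset.mem_univ j⟩)]
    exact Ideal.mul_mem_left _ _ (hf1 j hj)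
  have hcnot : c ∉ δ (Is k) := by
    intro hcin
    have := hprime k
    obtain ⟨j, hjmem, hjin⟩ := Ideal.IsPrime.prod_mem_iff.mp hcin
    exact hf2 j (Finset.mem_erase.mp hjmem).1 hjin
  have hmem : a * (b * c) ∈ ⨅ i, Is i := by
    rw [Ideal.mem_iInf]
    intro i
    by_cases hi : i = k
    · subst hi
      rw [← mul_assoc]
      exact Ideal.mul_mem_right _ _ hab
    · exact Ideal.mul_mem_left _ _ (Ideal.mul_mem_left _ _ (hcmem i hi))
  rcases h.2 a (b * c) hmem with h' | h'
  · exact absurd h' ha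
  · have hbc : b * c ∈ δ (Is k) := hmono _ _ (iInf_le _ k) h'
    rcases (hprime k).mem_or_mem hbc with hb | hc'
    · exact Or.inr hb
    · exact absurd hc' hcnot
end

section
/- Let R and S be commutative rings with nonzero identity, let δ and γ be expansion functions of the ideals of R and S respectively, and let f : R → S be a surjective ring homomorphism such that δ(f⁻¹(J)) = f⁻¹(γ(J)) for every ideal J of S (a δγ-homomorphism). If I is a δ-J-ideal of R with ker f ⊆ I, then the image f(I) is a γ-J-ideal of S. -/
theorem image_deltaJ {R S : Type*} [CommRing R] [CommRing S] [Nontrivial R] [Nontrivial S]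
    (δ : Ideal R → Ideal R) (γ : Ideal S → Ideal S)
    (hδexp : ∀ I : Ideal R, I ≤ δ I)
    (hδmono : ∀ I J : Ideal R, I ≤ J → δ I ≤ δ J)
    (hγexp : ∀ I : Ideal S, I ≤ γ I)
    (hγmono : ∀ I J : Ideal S, I ≤ J → γ I ≤ γ J)
    (f : R →+* S) (hf : Function.Surjective f)
    (hδγ : ∀ J : Ideal S, δ (J.comap f) = (γ J).comap f)
    (I : Ideal R) (hker : RingHom.ker f ≤ I)
    (hI : IsDeltaJIdeal δ I) :
    IsDeltaJIdeal γ (I.map f) := by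
  obtain ⟨hItop, hJ⟩ := hI
  have hcm : (I.map f).comap f = I := by
    rw [Ideal.comap_map_of_surjective f hf, ← RingHom.ker_eq_comap_bot, sup_eq_left.mpr hker]
  constructor
  · intro h
    apply hItop
    rw [← hcm, h, Ideal.comap_top]
  · intro a b hab
    obtain ⟨x, rfl⟩ := hf a
    obtain ⟨y, rfl⟩ := hf b
    have hxy : x * y ∈ I := by
      rw [← hcm]; simpa using hab
    rcases hJ x y hxy with hx | hy
    · left
      have : x ∈ ((⊥ : Ideal S).jacobson).comap f := by
        rw [Ideal.comap_jacobson_of_surjective hf]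
        exact Ideal.jacobson_mono bot_le hx
      exact this
    · right
      have := (hδγ (I.map f)) ▸ (hcm ▸ hy)
      exact this
end

section
/- Let R be a commutative ring with nonzero identity, S a multiplicatively closed subset of R, and δ an expansion function of the ideals of R. Let δ_S be an expansion function of the ideals of the localization S⁻¹R satisfying δ_S(S⁻¹I) = S⁻¹(δ(I)) for every ideal I of R, and suppose J(S⁻¹R) = S⁻¹(J(R)). If I is a δ-J-ideal of R with I ∩ S = ∅, then S⁻¹I is a δ_S-J-ideal of S⁻¹R. -/
theorem localization_deltaJ {R : Type*} [CommRing R] [Nontrivial R]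
    (S : Submonoid R) (Rₛ : Type*) [CommRing Rₛ] [Algebra R Rₛ] [IsLocalization S Rₛ]
    (δ : Ideal R → Ideal R)
    (hδexp : ∀ I : Ideal R, I ≤ δ I)
    (hδmono : ∀ I J : Ideal R, I ≤ J → δ I ≤ δ J)
    (δS : Ideal Rₛ → Ideal Rₛ)
    (hδSexp : ∀ I : Ideal Rₛ, I ≤ δS I)
    (hδSmono : ∀ I J : Ideal Rₛ, I ≤ J → δS I ≤ δS J)
    (hcompat : ∀ I : Ideal R,
      δS (I.map (algebraMap R Rₛ)) = (δ I).map (algebraMap R Rₛ))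
    (hJ : (⊥ : Ideal Rₛ).jacobson =
      ((⊥ : Ideal R).jacobson).map (algebraMap R Rₛ))
    (I : Ideal R) (hI : IsDeltaJIdeal δ I)
    (hdisj : Disjoint (I : Set R) (S : Set R)) :
    IsDeltaJIdeal δS (I.map (algebraMap R Rₛ)) := by
  obtain ⟨hItop, hIJ⟩ := hI
  constructor
  · intro htop
    have h1 : (1 : Rₛ) ∈ I.map (algebraMap R Rₛ) := htop ▸ Submodule.mem_top
    have h1' : IsLocalization.mk' Rₛ (1 : R) (1 : S) ∈ I.map (algebraMap R Rₛ) := by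
      rwa [IsLocalization.mk'_one, map_one]
    rw [IsLocalization.mk'_mem_map_algebraMap_iff S] at h1'
    obtain ⟨w, hwS, hwI⟩ := h1'
    rw [mul_one] at hwI
    exact (hdisj.le_bot ⟨hwI, hwS⟩)
  · intro x y hxy
    obtain ⟨⟨r, s⟩, rfl⟩ := IsLocalization.mk'_surjective S x
    obtain ⟨⟨t, u⟩, rfl⟩ := IsLocalization.mk'_surjective S y
    rw [← IsLocalization.mk'_mul,
      IsLocalization.mk'_mem_map_algebraMap_iff S] at hxy
    obtain ⟨w, hwS, hwI⟩ := hxy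
    have h2 : (w * r) * t ∈ I := by rwa [← mul_assoc] at hwI
    rcases hIJ (w * r) t h2 with h | h
    · left
      rw [hJ, IsLocalization.mk'_mem_map_algebraMap_iff S]
      exact ⟨w, hwS, h⟩
    · right
      rw [hcompat, IsLocalization.mk'_mem_map_algebraMap_iff S]
      exact ⟨1, one_mem S, by rwa [one_mul]⟩
end
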